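/- Let G be a finite acyclic directed graph with vertex set V whose edge set is partitioned into 1-edges E₁ and 2-edges E₂, satisfying axiom (B0). Let ℓ : V → {0, c, 1} be a labeling satisfying the local axioms (B1(i)), (B1(ii)), (B2(i)), (B2(ii)). Declare a vertex v central if ℓ(v) = c, and declare a 1-edge (u,v) central if (ℓ(u),ℓ(v)) = (0,1). Then this designation of central elements satisfies axioms (B1) and (B2); moreover every vertex labeled 0 is left and every vertex labeled 1 is right with respect to this designation. -/

import Mathlib

/-- The three-element label set `{0, c, 1}`. -/
inductive Lab : Type
  | zero | c | one
deriving DecidableEq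

/-- A maximal directed path (a "string") in a digraph `E`: a sequence of distinct
vertices `p 0, …, p n` with consecutive edges, whose first vertex has no entering
edge and whose last vertex has no leaving edge. -/
def IsMaxPath {V : Type*} (E : V → V → Prop) (n : ℕ) (p : Fin (n + 1) → V) : Prop :=
  Function.Injective p ∧
  (∀ i : Fin n, E (p i.castSucc) (p i.succ)) ∧
  (∀ u : V, ¬ E u (p 0)) ∧
  (∀ u : V, ¬ E (p (Fin.last n)) u)

/-- Axiom (B0) for one color: every vertex has at most one leaving and at most one
entering edge of that color. -/
def AxiomB0 {V : Type*} (E : V → V → Prop) : Prop :=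
  (∀ u v w : V, E u v → E u w → v = w) ∧ (∀ u v w : V, E u w → E v w → u = v)

/-- Local axiom (B1(i)): for each 1-edge `(u, v)`, the pair of labels `(ℓ u, ℓ v)` is
one of `(0,0), (0,c), (0,1), (c,1), (1,1)`. -/
def B1i {V : Type*} (E₁ : V → V → Prop) (ℓ : V → Lab) : Prop :=
  ∀ u v : V, E₁ u v →
    (ℓ u, ℓ v) ∈ ({(Lab.zero, Lab.zero), (Lab.zero, Lab.c), (Lab.zero, Lab.one),
      (Lab.c, Lab.one), (Lab.one, Lab.one)} : Set (Lab × Lab))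

/-- Local axiom (B1(ii)): if `v` has no entering 1-edge then `ℓ v ≠ 1`, and if `v` has
no leaving 1-edge then `ℓ v ≠ 0`. -/
def B1ii {V : Type*} (E₁ : V → V → Prop) (ℓ : V → Lab) : Prop :=
  ∀ v : V, ((∀ u : V, ¬ E₁ u v) → ℓ v ≠ Lab.one) ∧ ((∀ u : V, ¬ E₁ v u) → ℓ v ≠ Lab.zero)

/-- Local axiom (B2(i)): for each 2-edge `(u, v)`, the pair of labels `(ℓ u, ℓ v)` is
one of `(1,1), (1,c), (c,0), (0,0)`. -/
def B2i {V : Type*} (E₂ : V → V → Prop) (ℓ : V → Lab) : Prop :=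
  ∀ u v : V, E₂ u v →
    (ℓ u, ℓ v) ∈ ({(Lab.one, Lab.one), (Lab.one, Lab.c), (Lab.c, Lab.zero),
      (Lab.zero, Lab.zero)} : Set (Lab × Lab))

/-- Local axiom (B2(ii)): if `v` has no entering 2-edge then `ℓ v ≠ 0`, and if `v` has
no leaving 2-edge then `ℓ v ≠ 1`. -/
def B2ii {V : Type*} (E₂ : V → V → Prop) (ℓ : V → Lab) : Prop :=
  ∀ v : V, ((∀ u : V, ¬ E₂ u v) → ℓ v ≠ Lab.zero) ∧ ((∀ u : V, ¬ E₂ v u) → ℓ v ≠ Lab.one)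

/-- Axiom (B1): each 1-string contains exactly one central element, which is either a
central vertex or a central 1-edge. -/
def AxiomB1 {V : Type*} (E₁ : V → V → Prop) (Cv : V → Prop) (Ce : V → V → Prop) : Prop :=
  ∀ (n : ℕ) (p : Fin (n + 1) → V), IsMaxPath E₁ n p →
    ((∃! i : Fin (n + 1), Cv (p i)) ∧ (∀ j : Fin n, ¬ Ce (p j.castSucc) (p j.succ))) ∨
    ((∃! j : Fin n, Ce (p j.castSucc) (p j.succ)) ∧ (∀ i : Fin (n + 1), ¬ Cv (p i)))

/-- A vertex is *left* if it lies in its 1-string strictly before the central element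
(where for a central 1-edge, the beginning vertex of the edge counts as left). -/
def LeftVtx {V : Type*} (E₁ : V → V → Prop) (Cv : V → Prop) (Ce : V → V → Prop)
    (v : V) : Prop :=
  ∃ (n : ℕ) (p : Fin (n + 1) → V) (i : Fin (n + 1)), IsMaxPath E₁ n p ∧ p i = v ∧
    ((∃ j : Fin (n + 1), Cv (p j) ∧ (i : ℕ) < (j : ℕ)) ∨
     (∃ j : Fin n, Ce (p j.castSucc) (p j.succ) ∧ (i : ℕ) ≤ (j : ℕ)))

/-- A vertex is *right* if it lies in its 1-string strictly after the central element
(where for a central 1-edge, the end vertex of the edge counts as right). -/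
def RightVtx {V : Type*} (E₁ : V → V → Prop) (Cv : V → Prop) (Ce : V → V → Prop)
    (v : V) : Prop :=
  ∃ (n : ℕ) (p : Fin (n + 1) → V) (i : Fin (n + 1)), IsMaxPath E₁ n p ∧ p i = v ∧
    ((∃ j : Fin (n + 1), Cv (p j) ∧ (j : ℕ) < (i : ℕ)) ∨
     (∃ j : Fin n, Ce (p j.castSucc) (p j.succ) ∧ (j : ℕ) < (i : ℕ)))

/-- Axiom (B2): each 2-string contains exactly one central vertex; all vertices of the
2-string before it are right, and all vertices after it are left. -/
def AxiomB2 {V : Type*} (E₁ E₂ : V → V → Prop) (Cv : V → Prop) (Ce : V → V → Prop) : Prop :=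
  ∀ (n : ℕ) (q : Fin (n + 1) → V), IsMaxPath E₂ n q →
    (∃! i : Fin (n + 1), Cv (q i)) ∧
    (∀ i j : Fin (n + 1), Cv (q i) →
      (j < i → RightVtx E₁ Cv Ce (q j)) ∧ (i < j → LeftVtx E₁ Cv Ce (q j)))

section Aux

variable {V : Type*}

private lemma list_reach {E : V → V → Prop} {l : List V} (hc : l.Chain' E) :
    ∀ (j : ℕ) (hj : j < l.length) (i : ℕ) (hi : i ≤ j),
      Relation.ReflTransGen E (l[i]'(lt_of_le_of_lt hi hj)) (l[j]'hj) := by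
  intro j
  induction j with
  | zero =>
    intro hj i hi
    obtain rfl : i = 0 := Nat.le_zero.mp hi
    exact Relation.ReflTransGen.refl
  | succ m ih =>
    intro hj i hi
    have hm' : m < l.length := by omega
    have step : E (l[m]'hm') (l[m+1]'hj) := by
      have := List.isChain_iff_getElem.1 hc m (by omega)
      simpa using this
    rcases Nat.lt_or_ge i (m+1) with h | h
    · exact (ih hm' i (by omega)).tail step
    · obtain rfl : i = m + 1 := by omega
      exact Relation.ReflTransGen.refl

private lemma exists_maxPath [Fintype V] {E : V → V → Prop}
    (hacyc : ∀ v : V, ¬ Relation.TransGen E v v) (v : V) :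
    ∃ (n : ℕ) (p : Fin (n + 1) → V) (i : Fin (n + 1)), IsMaxPath E n p ∧ p i = v := by
  classical
  set P : ℕ → Prop := fun k => ∃ l : List V, l.Chain' E ∧ l.Nodup ∧ v ∈ l ∧ l.length = k with hP
  have hbd : ∀ k, P k → k ≤ Fintype.card V := by
    rintro k ⟨l, _, hnd, _, rfl⟩; exact hnd.length_le_card
  have h1 : P 1 := ⟨[v], List.isChain_singleton v, by simp, by simp, rfl⟩
  set N := Nat.findGreatest P (Fintype.card V) with hN
  have hN1 : 1 ≤ N := Nat.le_findGreatest (hbd 1 h1) h1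
  have hPN : P N := Nat.findGreatest_spec (hbd 1 h1) h1
  have hmax : ∀ k, N < k → ¬ P k := by
    intro k hk hPk
    exact Nat.findGreatest_is_greatest hk (hbd k hPk) hPk
  obtain ⟨l, hchain, hnd, hv, hlen⟩ := hPN
  have hlpos : 0 < l.length := by omega
  have hhead : ∀ u : V, ¬ E u (l[0]'hlpos) := by
    intro u hu
    by_cases hul : u ∈ l
    · obtain ⟨k, hk, rfl⟩ := List.mem_iff_getElem.1 hul
      have hreach := list_reach hchain k hk 0 (Nat.zero_le k)
      exact hacyc _ (Relation.TransGen.tail' hreach hu)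
    · have : P (N + 1) := by
        refine ⟨u :: l, ?_, ?_, by simp [hv], by simp [hlen]⟩
        · cases l with
          | nil => simp at hlpos
          | cons a t => exact List.isChain_cons_cons.2 ⟨hu, hchain⟩
        · simp [hnd, hul]
      exact hmax _ (Nat.lt_succ_self _) this
  have hlast : ∀ u : V, ¬ E (l[l.length - 1]'(by omega)) u := by
    intro u hu
    by_cases hul : u ∈ l
    · obtain ⟨k, hk, rfl⟩ := List.mem_iff_getElem.1 hul
      have hreach := list_reach hchain (l.length - 1) (by omega) k (by omega)
      exact hacyc _ (Relation.TransGen.tail' hreach hu)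
    · have : P (N + 1) := by
        refine ⟨l ++ [u], ?_, ?_, by simp [hv], by simp [hlen]⟩
        · rw [show (l ++ [u]).Chain' E ↔ List.IsChain E (l ++ [u]) from Iff.rfl, List.isChain_append]
          refine ⟨hchain, List.isChain_singleton u, ?_⟩
          intro x hx y hy
          simp at hy; subst hy
          rw [List.getLast?_eq_getLast_of_ne_nil (List.ne_nil_of_length_pos hlpos)] at hx
          simp at hx; subst hx
          rwa [List.getLast_eq_getElem]
        · simp [List.nodup_append, hnd, hul]; exact fun a ha h => hul (h ▸ ha)
      exact hmax _ (Nat.lt_succ_self _) this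
  refine ⟨l.length - 1, fun i => l[(i : ℕ)]'(by omega), ?_⟩
  obtain ⟨k, hk, hkv⟩ := List.mem_iff_getElem.1 hv
  refine ⟨⟨k, by omega⟩, ⟨?_, ?_, ?_, ?_⟩, hkv⟩
  · intro i j hij
    have := (List.nodup_iff_injective_get.1 hnd)
      (show l.get ⟨(i : ℕ), by omega⟩ = l.get ⟨(j : ℕ), by omega⟩ by simpa using hij)
    have h2 : (i : ℕ) = (j : ℕ) := by simpa [Fin.ext_iff] using this
    exact Fin.ext h2
  · intro i
    have := List.isChain_iff_getElem.1 hchain (i : ℕ) (by omega)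
    simpa using this
  · simpa using hhead
  · have : ((Fin.last (l.length - 1)) : ℕ) = l.length - 1 := rfl
    simpa [this] using hlast

private lemma lab_up {g : ℕ → Lab} {n : ℕ} (Q : Lab → Prop)
    (hstab : ∀ k, n ≤ k → g (k + 1) = g k)
    (hstep : ∀ k, k < n → Q (g k) → Q (g (k + 1))) :
    ∀ k m, k ≤ m → Q (g k) → Q (g m) := by
  intro k m hkm hQ
  induction m, hkm using Nat.le_induction with
  | base => exact hQ
  | succ m hm ih =>
    rcases Nat.lt_or_ge m n with h | h
    · exact hstep m h ih
    · rw [hstab m h]; exact ih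

private lemma key1 {E₁ : V → V → Prop} {ℓ : V → Lab}
    (h1i : B1i E₁ ℓ) (h1ii : B1ii E₁ ℓ)
    {n : ℕ} {p : Fin (n + 1) → V} (hp : IsMaxPath E₁ n p) :
    (∃ j : Fin (n + 1), ℓ (p j) = Lab.c ∧
        (∀ i : Fin (n + 1), (i : ℕ) < (j : ℕ) → ℓ (p i) = Lab.zero) ∧
        (∀ i : Fin (n + 1), (j : ℕ) < (i : ℕ) → ℓ (p i) = Lab.one)) ∨
    (∃ j : Fin n, (∀ i : Fin (n + 1), (i : ℕ) ≤ (j : ℕ) → ℓ (p i) = Lab.zero) ∧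
        (∀ i : Fin (n + 1), (j : ℕ) < (i : ℕ) → ℓ (p i) = Lab.one)) := by
  classical
  obtain ⟨hinj, hstep, hfirst, hlast⟩ := hp
  set g : ℕ → Lab := fun k => ℓ (p ⟨min k n, by omega⟩) with hgdef
  have hgi : ∀ i : Fin (n + 1), g (i : ℕ) = ℓ (p i) := by
    intro i
    simp only [hgdef]
    congr 2
    ext
    simp
    omega
  have hstab : ∀ k, n ≤ k → g (k + 1) = g k := by
    intro k hk
    simp only [hgdef]
    congr 3
    omega
  have hpair : ∀ k, k < n →
      (g k = Lab.zero ∧ g (k + 1) = Lab.zero) ∨ (g k = Lab.zero ∧ g (k + 1) = Lab.c) ∨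
      (g k = Lab.zero ∧ g (k + 1) = Lab.one) ∨ (g k = Lab.c ∧ g (k + 1) = Lab.one) ∨
      (g k = Lab.one ∧ g (k + 1) = Lab.one) := by
    intro k hk
    have e1 : g k = ℓ (p ((⟨k, hk⟩ : Fin n).castSucc)) := by
      simp only [hgdef]
      congr 2
      ext
      simp
      omega
    have e2 : g (k + 1) = ℓ (p ((⟨k, hk⟩ : Fin n).succ)) := by
      simp only [hgdef]
      congr 2
      ext
      simp
      omega
    have hmem := h1i _ _ (hstep ⟨k, hk⟩)
    rw [← e1, ← e2] at hmem
    simpa [Set.mem_insert_iff, Prod.ext_iff] using hmem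
  have s1 : ∀ k, k < n → g k = Lab.one → g (k + 1) = Lab.one := by
    intro k hk h
    rcases hpair k hk with ⟨h1, h2⟩ | ⟨h1, h2⟩ | ⟨h1, h2⟩ | ⟨h1, h2⟩ | ⟨h1, h2⟩ <;> simp_all
  have sc : ∀ k, k < n → g k = Lab.c → g (k + 1) = Lab.one := by
    intro k hk h
    rcases hpair k hk with ⟨h1, h2⟩ | ⟨h1, h2⟩ | ⟨h1, h2⟩ | ⟨h1, h2⟩ | ⟨h1, h2⟩ <;> simp_all
  have up1 : ∀ k m, k ≤ m → g k = Lab.one → g m = Lab.one :=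
    lab_up (fun x => x = Lab.one) hstab s1
  have g0 : g 0 = ℓ (p 0) := by simpa using hgi 0
  have gn : g n = ℓ (p (Fin.last n)) := by simpa using hgi (Fin.last n)
  have hg0 : g 0 ≠ Lab.one := by rw [g0]; exact (h1ii (p 0)).1 hfirst
  have hgn : g n ≠ Lab.zero := by rw [gn]; exact (h1ii (p (Fin.last n))).2 hlast
  by_cases hc : ∃ j : Fin (n + 1), ℓ (p j) = Lab.c
  · obtain ⟨j, hj⟩ := hc
    left
    have hjn : (j : ℕ) ≤ n := by omega
    have hgj : g (j : ℕ) = Lab.c := by rw [hgi]; exact hj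
    refine ⟨j, hj, ?_, ?_⟩
    · intro i hi
      rw [← hgi]
      rcases hl : g (i : ℕ) with _ | _ | _
      · rfl
      · exfalso
        have h1 : g ((i : ℕ) + 1) = Lab.one := sc _ (by omega) hl
        have := up1 _ _ (by omega : (i : ℕ) + 1 ≤ (j : ℕ)) h1
        simp_all
      · exfalso
        have := up1 _ _ (le_of_lt hi) hl
        simp_all
    · intro i hi
      have hin : (i : ℕ) ≤ n := by omega
      rw [← hgi]
      have h1 : g ((j : ℕ) + 1) = Lab.one := sc _ (by omega) hgj
      exact up1 _ _ (by omega) h1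
  · push_neg at hc
    right
    have hgc : ∀ k, k ≤ n → g k ≠ Lab.c := by
      intro k hk h
      have h2 := hc ⟨k, by omega⟩
      rw [← hgi ⟨k, by omega⟩] at h2
      exact h2 h
    have h00 : g 0 = Lab.zero := by
      rcases h : g 0 with _ | _ | _
      · rfl
      · exact absurd h (hgc 0 (by omega))
      · exact absurd h hg0
    have hn1 : g n = Lab.one := by
      rcases h : g n with _ | _ | _
      · exact absurd h hgn
      · exact absurd h (hgc n le_rfl)
      · rfl
    have hex : ∃ k, g k = Lab.one := ⟨n, hn1⟩
    set k := Nat.find hex with hkdef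
    have hk1 : g k = Lab.one := Nat.find_spec hex
    have hkmin : ∀ m, m < k → g m ≠ Lab.one := fun m hm => Nat.find_min hex hm
    have hkn : k ≤ n := Nat.find_min' hex hn1
    have hk0 : k ≠ 0 := by
      intro h
      rw [h, h00] at hk1
      simp at hk1
    refine ⟨⟨k - 1, by omega⟩, ?_, ?_⟩
    · intro i hi
      have hi' : (i : ℕ) ≤ k - 1 := hi
      rw [← hgi]
      rcases h : g (i : ℕ) with _ | _ | _
      · rfl
      · exact absurd h (hgc _ (by omega))
      · exact absurd h (hkmin _ (by omega))
    · intro i hi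
      have hi' : k - 1 < (i : ℕ) := hi
      rw [← hgi]
      exact up1 _ _ (by omega) hk1

set_option maxHeartbeats 1000000 in
private lemma key2 {E₂ : V → V → Prop} {ℓ : V → Lab}
    (h2i : B2i E₂ ℓ) (h2ii : B2ii E₂ ℓ)
    {n : ℕ} {q : Fin (n + 1) → V} (hq : IsMaxPath E₂ n q) :
    ∃ j : Fin (n + 1), ℓ (q j) = Lab.c ∧
      (∀ i : Fin (n + 1), (i : ℕ) < (j : ℕ) → ℓ (q i) = Lab.one) ∧
      (∀ i : Fin (n + 1), (j : ℕ) < (i : ℕ) → ℓ (q i) = Lab.zero) := by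
  classical
  obtain ⟨hinj, hstep, hfirst, hlast⟩ := hq
  set g : ℕ → Lab := fun k => ℓ (q ⟨min k n, by omega⟩) with hgdef
  have hgi : ∀ i : Fin (n + 1), g (i : ℕ) = ℓ (q i) := by
    intro i
    simp only [hgdef]
    congr 2
    ext
    simp
    omega
  have hstab : ∀ k, n ≤ k → g (k + 1) = g k := by
    intro k hk
    simp only [hgdef]
    congr 3
    omega
  have hpair : ∀ k, k < n →
      (g k = Lab.one ∧ g (k + 1) = Lab.one) ∨ (g k = Lab.one ∧ g (k + 1) = Lab.c) ∨
      (g k = Lab.c ∧ g (k + 1) = Lab.zero) ∨ (g k = Lab.zero ∧ g (k + 1) = Lab.zero) := by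
    intro k hk
    have e1 : g k = ℓ (q ((⟨k, hk⟩ : Fin n).castSucc)) := by
      simp only [hgdef]
      congr 2
      ext
      simp
      omega
    have e2 : g (k + 1) = ℓ (q ((⟨k, hk⟩ : Fin n).succ)) := by
      simp only [hgdef]
      congr 2
      ext
      simp
      omega
    have hmem := h2i _ _ (hstep ⟨k, hk⟩)
    rw [← e1, ← e2] at hmem
    simpa [Set.mem_insert_iff, Prod.ext_iff] using hmem
  have t0 : ∀ k, k < n → g k = Lab.zero → g (k + 1) = Lab.zero := by
    intro k hk h
    rcases hpair k hk with ⟨h1, h2⟩ | ⟨h1, h2⟩ | ⟨h1, h2⟩ | ⟨h1, h2⟩ <;> simp_all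
  have tc : ∀ k, k < n → g k = Lab.c → g (k + 1) = Lab.zero := by
    intro k hk h
    rcases hpair k hk with ⟨h1, h2⟩ | ⟨h1, h2⟩ | ⟨h1, h2⟩ | ⟨h1, h2⟩ <;> simp_all
  have t1r : ∀ k, k < n → g (k + 1) = Lab.one → g k = Lab.one := by
    intro k hk h
    rcases hpair k hk with ⟨h1, h2⟩ | ⟨h1, h2⟩ | ⟨h1, h2⟩ | ⟨h1, h2⟩ <;> simp_all
  have tcr : ∀ k, k < n → g (k + 1) = Lab.c → g k = Lab.one := by
    intro k hk h
    rcases hpair k hk with ⟨h1, h2⟩ | ⟨h1, h2⟩ | ⟨h1, h2⟩ | ⟨h1, h2⟩ <;> simp_all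
  have t1f : ∀ k, k < n → g k = Lab.one → g (k + 1) = Lab.one ∨ g (k + 1) = Lab.c := by
    intro k hk h
    rcases hpair k hk with ⟨h1, h2⟩ | ⟨h1, h2⟩ | ⟨h1, h2⟩ | ⟨h1, h2⟩ <;> simp_all
  have up0 : ∀ k m, k ≤ m → g k = Lab.zero → g m = Lab.zero :=
    lab_up (fun x => x = Lab.zero) hstab t0
  have dn1 : ∀ k m, k ≤ m → g m = Lab.one → g k = Lab.one := by
    intro k m h hm
    by_contra hk
    exact lab_up (fun x => x ≠ Lab.one) hstab (fun a ha h' h2 => h' (t1r a ha h2)) k m h hk hm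
  have g0 : g 0 = ℓ (q 0) := by simpa using hgi 0
  have gn : g n = ℓ (q (Fin.last n)) := by simpa using hgi (Fin.last n)
  have hg0 : g 0 ≠ Lab.zero := by rw [g0]; exact (h2ii (q 0)).1 hfirst
  have hgn : g n ≠ Lab.one := by rw [gn]; exact (h2ii (q (Fin.last n))).2 hlast
  have hcex : ∃ j : Fin (n + 1), ℓ (q j) = Lab.c := by
    by_contra hcc
    push_neg at hcc
    have hgc : ∀ k, k ≤ n → g k ≠ Lab.c := by
      intro k hk h
      have h2 := hcc ⟨k, by omega⟩
      rw [← hgi ⟨k, by omega⟩] at h2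
      exact h2 h
    have h01 : g 0 = Lab.one := by
      rcases h : g 0 with _ | _ | _
      · exact absurd h hg0
      · exact absurd h (hgc 0 (by omega))
      · rfl
    have := lab_up (fun x => x = Lab.one) hstab
      (fun a ha h => (t1f a ha h).resolve_right (hgc (a + 1) (by omega))) 0 n (Nat.zero_le n) h01
    exact hgn this
  obtain ⟨j, hj⟩ := hcex
  have hjn : (j : ℕ) ≤ n := by omega
  have hgj : g (j : ℕ) = Lab.c := by rw [hgi]; exact hj
  refine ⟨j, hj, ?_, ?_⟩
  · intro i hi
    rw [← hgi]
    have hj1 : g ((j : ℕ) - 1) = Lab.one := by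
      apply tcr _ (by omega)
      have he : (j : ℕ) - 1 + 1 = (j : ℕ) := by omega
      rw [he]
      exact hgj
    exact dn1 _ _ (by omega) hj1
  · intro i hi
    have hin : (i : ℕ) ≤ n := by omega
    rw [← hgi]
    exact up0 _ _ (by omega) (tc _ (by omega) hgj)

end Aux

/-- In a finite acyclic 2-edge-colored digraph satisfying (B0), given a labeling `ℓ`
satisfying the local axioms (B1(i)), (B1(ii)), (B2(i)), (B2(ii)), declaring a vertex
central when `ℓ v = c` and a 1-edge `(u,v)` central when `(ℓ u, ℓ v) = (0,1)` yields a
designation of central elements satisfying (B1) and (B2); moreover every vertex labeled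
`0` is left and every vertex labeled `1` is right with respect to this designation. -/


theorem central_designation_of_local_axioms {V : Type*} [Fintype V]
    (E₁ E₂ : V → V → Prop)
    (hacyc : ∀ v : V, ¬ Relation.TransGen (fun a b => E₁ a b ∨ E₂ a b) v v)
    (hB0₁ : AxiomB0 E₁) (hB0₂ : AxiomB0 E₂)
    (ℓ : V → Lab) (h1i : B1i E₁ ℓ) (h1ii : B1ii E₁ ℓ)
    (h2i : B2i E₂ ℓ) (h2ii : B2ii E₂ ℓ) :
    AxiomB1 E₁ (fun v => ℓ v = Lab.c)
      (fun u v => E₁ u v ∧ ℓ u = Lab.zero ∧ ℓ v = Lab.one) ∧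
    AxiomB2 E₁ E₂ (fun v => ℓ v = Lab.c)
      (fun u v => E₁ u v ∧ ℓ u = Lab.zero ∧ ℓ v = Lab.one) ∧
    (∀ v : V, ℓ v = Lab.zero → LeftVtx E₁ (fun v => ℓ v = Lab.c)
      (fun u v => E₁ u v ∧ ℓ u = Lab.zero ∧ ℓ v = Lab.one) v) ∧
    (∀ v : V, ℓ v = Lab.one → RightVtx E₁ (fun v => ℓ v = Lab.c)
      (fun u v => E₁ u v ∧ ℓ u = Lab.zero ∧ ℓ v = Lab.one) v) := by
  classical
  have hacyc1 : ∀ v : V, ¬ Relation.TransGen E₁ v v := fun v h =>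
    hacyc v (Relation.TransGen.mono (fun a b hab => Or.inl hab) _ _ h)
  have hL : ∀ v : V, ℓ v = Lab.zero → LeftVtx E₁ (fun v => ℓ v = Lab.c)
      (fun u v => E₁ u v ∧ ℓ u = Lab.zero ∧ ℓ v = Lab.one) v := by
    intro v hv
    obtain ⟨n, p, i, hp, hpi⟩ := exists_maxPath hacyc1 v
    refine ⟨n, p, i, hp, hpi, ?_⟩
    rcases key1 h1i h1ii hp with ⟨j, hjc, hlt, hgt⟩ | ⟨j, hle, hgt⟩
    · left
      refine ⟨j, hjc, ?_⟩
      rcases Nat.lt_trichotomy (i : ℕ) (j : ℕ) with h | h | h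
      · exact h
      · exfalso
        have hij : i = j := Fin.ext h
        rw [← hij, hpi, hv] at hjc
        simp at hjc
      · exfalso
        have h2 := hgt i h
        rw [hpi, hv] at h2
        simp at h2
    · right
      have hile : (i : ℕ) ≤ (j : ℕ) := by
        by_contra h
        have h2 := hgt i (by omega)
        rw [hpi, hv] at h2
        simp at h2
      exact ⟨j, ⟨hp.2.1 j, hle j.castSucc (by simp), hgt j.succ (by simp)⟩, hile⟩
  have hR : ∀ v : V, ℓ v = Lab.one → RightVtx E₁ (fun v => ℓ v = Lab.c)
      (fun u v => E₁ u v ∧ ℓ u = Lab.zero ∧ ℓ v = Lab.one) v := by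
    intro v hv
    obtain ⟨n, p, i, hp, hpi⟩ := exists_maxPath hacyc1 v
    refine ⟨n, p, i, hp, hpi, ?_⟩
    rcases key1 h1i h1ii hp with ⟨j, hjc, hlt, hgt⟩ | ⟨j, hle, hgt⟩
    · left
      refine ⟨j, hjc, ?_⟩
      rcases Nat.lt_trichotomy (j : ℕ) (i : ℕ) with h | h | h
      · exact h
      · exfalso
        have hij : i = j := Fin.ext h.symm
        rw [← hij, hpi, hv] at hjc
        simp at hjc
      · exfalso
        have h2 := hlt i h
        rw [hpi, hv] at h2
        simp at h2
    · right
      have hile : (j : ℕ) < (i : ℕ) := by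
        by_contra h
        have h2 := hle i (by omega)
        rw [hpi, hv] at h2
        simp at h2
      exact ⟨j, ⟨hp.2.1 j, hle j.castSucc (by simp), hgt j.succ (by simp)⟩, hile⟩
  have hB1 : AxiomB1 E₁ (fun v => ℓ v = Lab.c)
      (fun u v => E₁ u v ∧ ℓ u = Lab.zero ∧ ℓ v = Lab.one) := by
    intro n p hp
    rcases key1 h1i h1ii hp with ⟨j, hjc, hlt, hgt⟩ | ⟨j, hle, hgt⟩
    · left
      constructor
      · refine ⟨j, hjc, ?_⟩
        intro y hy
        have hy' : ℓ (p y) = Lab.c := hy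
        rcases Nat.lt_trichotomy (y : ℕ) (j : ℕ) with h | h | h
        · exact absurd (hlt y h) (by simp [hy'])
        · exact Fin.ext h
        · exact absurd (hgt y h) (by simp [hy'])
      · rintro k ⟨hke, hk0, hk1⟩
        have hkj : (k : ℕ) < (j : ℕ) := by
          rcases Nat.lt_trichotomy ((k : ℕ)) ((j : ℕ)) with h | h | h
          · exact h
          · exfalso
            have hcs : k.castSucc = j := Fin.ext (by simpa using h)
            rw [hcs, hjc] at hk0
            simp at hk0
          · exfalso
            have h2 := hgt k.castSucc (by simpa using h)
            rw [h2] at hk0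
            simp at hk0
        rcases Nat.lt_or_ge ((k : ℕ) + 1) ((j : ℕ)) with h2 | h2
        · have h3 := hlt k.succ (by simpa using h2)
          rw [h3] at hk1
          simp at hk1
        · have hsj : k.succ = j := Fin.ext (by simp; omega)
          rw [hsj, hjc] at hk1
          simp at hk1
    · right
      constructor
      · refine ⟨j, ⟨hp.2.1 j, hle j.castSucc (by simp), hgt j.succ (by simp)⟩, ?_⟩
        rintro k ⟨hke, hk0, hk1⟩
        have hkle : (k : ℕ) ≤ (j : ℕ) := by
          by_contra h
          have h2 := hgt k.castSucc (by simp; omega)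
          rw [h2] at hk0
          simp at hk0
        have hjlt : (j : ℕ) < (k : ℕ) + 1 := by
          by_contra h
          have h2 := hle k.succ (by simp; omega)
          rw [h2] at hk1
          simp at hk1
        exact Fin.ext (by omega)
      · intro i hi
        have hi' : ℓ (p i) = Lab.c := hi
        rcases Nat.lt_or_ge ((j : ℕ)) ((i : ℕ)) with h | h
        · have h2 := hgt i h
          rw [h2] at hi'
          simp at hi'
        · have h2 := hle i h
          rw [h2] at hi'
          simp at hi'
  have hB2 : AxiomB2 E₁ E₂ (fun v => ℓ v = Lab.c)
      (fun u v => E₁ u v ∧ ℓ u = Lab.zero ∧ ℓ v = Lab.one) := by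
    intro n q hq
    obtain ⟨j, hjc, hbef, haft⟩ := key2 h2i h2ii hq
    have huniq : ∀ y : Fin (n + 1), ℓ (q y) = Lab.c → y = j := by
      intro y hy
      rcases Nat.lt_trichotomy ((y : ℕ)) ((j : ℕ)) with h | h | h
      · exact absurd (hbef y h) (by simp [hy])
      · exact Fin.ext h
      · exact absurd (haft y h) (by simp [hy])
    refine ⟨⟨j, hjc, huniq⟩, ?_⟩
    intro i j' hci
    have hij : i = j := huniq i hci
    constructor
    · intro h
      rw [hij] at h
      exact hR _ (hbef j' h)
    · intro h
      rw [hij] at h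
      exact hL _ (haft j' h)
  exact ⟨hB1, hB2, hL, hR⟩
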